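/- Let $r$ and $s$ be integers with $r \geq 3$ and $s \geq r-1$, and write $s-1 = w(r-2) + v$ with integers $w, v$ satisfying $0 \leq v \leq r-3$. Then for every integer $N \geq w$ one has $\sum_{i=1}^{N} (i-1)\big(s - \min\{s,\, i(r-2)+1\}\big) = \binom{w}{3}(r-2) + \binom{w}{2}v$. -/

import Mathlib

lemma Icc_int_insert (n : ℤ) (hn : 0 ≤ n) :
    Finset.Icc (1 : ℤ) (n + 1) = insert (n + 1) (Finset.Icc (1 : ℤ) n) := by
  ext i; simp only [Finset.mem_Icc, Finset.mem_insert]; omega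

lemma sum_S1 (n : ℕ) :
    ∑ i ∈ Finset.Icc (1 : ℤ) (n : ℤ), ((i : ℚ) - 1) = (n : ℚ) * ((n : ℚ) - 1) / 2 := by
  induction n with
  | zero => simp
  | succ m ih =>
    push_cast
    rw [Icc_int_insert m (by positivity),
      Finset.sum_insert (by simp [Finset.mem_Icc])]
    push_cast
    rw [ih]
    push_cast
    ring

lemma sum_S2 (n : ℕ) :
    ∑ i ∈ Finset.Icc (1 : ℤ) (n : ℤ), ((i : ℚ) - 1) * (i : ℚ)
      = ((n : ℚ) - 1) * (n : ℚ) * ((n : ℚ) + 1) / 3 := by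
  induction n with
  | zero => simp
  | succ m ih =>
    push_cast
    rw [Icc_int_insert m (by positivity),
      Finset.sum_insert (by simp [Finset.mem_Icc])]
    push_cast
    rw [ih]
    push_cast
    ring

/-- Let `r` and `s` be integers with `r ≥ 3` and `s ≥ r-1`, and write
`s - 1 = w*(r-2) + v` with `0 ≤ v ≤ r-3`. Then for every integer `N ≥ w`,
`∑_{i=1}^{N} (i-1)*(s - min s (i*(r-2)+1)) = (w choose 3)*(r-2) + (w choose 2)*v`,
where `(w choose 2) = w*(w-1)/2` and `(w choose 3) = w*(w-1)*(w-2)/6`. -/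
theorem stmt_2 (r s w v N : ℤ) (hr : 3 ≤ r) (hs : r - 1 ≤ s)
    (hdiv : s - 1 = w * (r - 2) + v) (hv0 : 0 ≤ v) (hv1 : v ≤ r - 3)
    (hN : w ≤ N) :
    ((∑ i ∈ Finset.Icc (1 : ℤ) N, (i - 1) * (s - min s (i * (r - 2) + 1)) : ℤ) : ℚ)
      = ((w : ℚ) * (w - 1) * (w - 2) / 6) * ((r : ℚ) - 2)
        + ((w : ℚ) * (w - 1) / 2) * (v : ℚ) := by
  have hw1 : 1 ≤ w := by nlinarith
  -- restrict the sum to Icc 1 w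
  have hsub : Finset.Icc (1 : ℤ) w ⊆ Finset.Icc (1 : ℤ) N := by
    apply Finset.Icc_subset_Icc_right hN
  have hstep : ∑ i ∈ Finset.Icc (1 : ℤ) N, (i - 1) * (s - min s (i * (r - 2) + 1))
      = ∑ i ∈ Finset.Icc (1 : ℤ) w, (i - 1) * (s - min s (i * (r - 2) + 1)) := by
    refine (Finset.sum_subset hsub ?_).symm
    intro i hi hni
    simp only [Finset.mem_Icc] at hi hni
    have hiw : w + 1 ≤ i := by omega
    have : min s (i * (r - 2) + 1) = s := by
      apply min_eq_left
      nlinarith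
    rw [this]; ring
  rw [hstep]
  have hval : ∀ i ∈ Finset.Icc (1 : ℤ) w,
      (i - 1) * (s - min s (i * (r - 2) + 1)) = (i - 1) * (s - (i * (r - 2) + 1)) := by
    intro i hi
    simp only [Finset.mem_Icc] at hi
    have : min s (i * (r - 2) + 1) = i * (r - 2) + 1 := by
      apply min_eq_right
      nlinarith
    rw [this]
  rw [Finset.sum_congr rfl hval]
  push_cast
  obtain ⟨n, rfl⟩ : ∃ n : ℕ, w = (n : ℤ) := ⟨w.toNat, by omega⟩
  have expand : ∀ i ∈ Finset.Icc (1 : ℤ) (n : ℤ),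
      ((i : ℚ) - 1) * ((s : ℚ) - ((i : ℚ) * ((r : ℚ) - 2) + 1))
        = ((i : ℚ) - 1) * ((s : ℚ) - 1) - (((i : ℚ) - 1) * (i : ℚ)) * ((r : ℚ) - 2) := by
    intro i _; ring
  rw [Finset.sum_congr rfl expand, Finset.sum_sub_distrib, ← Finset.sum_mul,
    ← Finset.sum_mul, sum_S1 n, sum_S2 n]
  have hsq : (s : ℚ) - 1 = (n : ℚ) * ((r : ℚ) - 2) + (v : ℚ) := by
    exact_mod_cast congrArg (Int.cast : ℤ → ℚ) hdiv
  rw [hsq]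
  push_cast
  ring
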